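/- Let m ≥ 3 and γ > 8m, and define S = [s_{jk}] ∈ M_m(ℂ) by s_{jk} = 2i/((j−k)γ + 2i). Then ‖S − I_m‖ < 1/4, and consequently S is positive definite. -/

import Mathlib

open Matrix ComplexOrder

/-- The operator norm of a complex square matrix (as a CLM on Euclidean space) is at most
its Frobenius norm. -/
lemma aux_opNorm_le_frobenius {n : ℕ} (A : Matrix (Fin n) (Fin n) ℂ) :
    ‖Matrix.toEuclideanCLM (𝕜 := ℂ) (n := Fin n) A‖ ≤
      Real.sqrt (∑ j, ∑ k, ‖A j k‖ ^ 2) := by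
  refine ContinuousLinearMap.opNorm_le_bound _ (Real.sqrt_nonneg _) fun x => ?_
  have key : (Matrix.toEuclideanCLM (𝕜 := ℂ) (n := Fin n) A) x
      = (WithLp.equiv 2 (Fin n → ℂ)).symm (A *ᵥ (WithLp.equiv 2 (Fin n → ℂ) x)) := by
    conv_lhs => rw [← (WithLp.equiv 2 (Fin n → ℂ)).symm_apply_apply x]
    rfl
  rw [key, EuclideanSpace.norm_eq, EuclideanSpace.norm_eq]
  simp only [WithLp.equiv_symm_apply, PiLp.toLp_apply]
  rw [← Real.sqrt_mul (by positivity)]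
  apply Real.sqrt_le_sqrt
  rw [Finset.sum_mul]
  apply Finset.sum_le_sum
  intro j _
  simp only [Matrix.mulVec, dotProduct]
  calc ‖∑ k, A j k * (WithLp.equiv 2 (Fin n → ℂ)) x k‖ ^ 2
      ≤ (∑ k, ‖A j k‖ * ‖(WithLp.equiv 2 (Fin n → ℂ)) x k‖) ^ 2 := by
        apply pow_le_pow_left₀ (norm_nonneg _)
        exact (norm_sum_le _ _).trans (le_of_eq (by simp [norm_mul]))
    _ ≤ (∑ k, ‖A j k‖ ^ 2) * ∑ k, ‖(WithLp.equiv 2 (Fin n → ℂ)) x k‖ ^ 2 :=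
        Finset.sum_mul_sq_le_sq_mul_sq _ _ _
    _ = (∑ k, ‖A j k‖ ^ 2) * ∑ k, ‖x k‖ ^ 2 := rfl

/- For γ > 8m, the matrix S with entries 2i/((j-k)γ + 2i) satisfies ‖S - I‖ < 1/4
(operator norm), and consequently S is positive definite. -/
theorem cauchy_like_matrix_posDef (m : ℕ) (hm : 3 ≤ m) (γ : ℝ) (hγ : 8 * m < γ)
    (S : Matrix (Fin m) (Fin m) ℂ)
    (hS : ∀ j k : Fin m, S j k =
      (2 * Complex.I) / ((((j : ℕ) : ℂ) - ((k : ℕ) : ℂ)) * (γ : ℂ) + 2 * Complex.I)) :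
    ‖Matrix.toEuclideanCLM (𝕜 := ℂ) (n := Fin m) (S - 1)‖ < 1 / 4 ∧ S.PosDef := by
  have hγ0 : (0:ℝ) < γ := lt_of_le_of_lt (by positivity) hγ
  have hm1 : (1:ℝ) ≤ (m:ℝ) := by exact_mod_cast le_trans (by norm_num) hm
  -- denominators are nonzero
  have hden : ∀ j k : Fin m,
      ((((j : ℕ) : ℂ) - ((k : ℕ) : ℂ)) * (γ : ℂ) + 2 * Complex.I) ≠ 0 := by
    intro j k h
    apply_fun Complex.im at h
    simp [Complex.add_im, Complex.mul_im] at h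
  have hden' : ∀ j k : Fin m,
      ((((j : ℕ) : ℂ) - ((k : ℕ) : ℂ)) * (γ : ℂ) - 2 * Complex.I) ≠ 0 := by
    intro j k h
    apply_fun Complex.im at h
    simp [Complex.sub_im, Complex.mul_im] at h
  -- entrywise bound on S - 1
  have hentry : ∀ j k : Fin m, ‖(S - 1) j k‖ ≤ 2 / γ := by
    intro j k
    rcases eq_or_ne j k with rfl | hjk
    · have h1 : S j j = 1 := by
        rw [hS]; simp
      simp [h1]
      positivity
    · have h2 : (S - 1) j k = S j k := by simp [one_apply_ne hjk]
      rw [h2, hS, norm_div]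
      have hnum : ‖(2 : ℂ) * Complex.I‖ = 2 := by simp
      rw [hnum]
      have h1le : (1:ℝ) ≤ |((j:ℕ):ℝ) - ((k:ℕ):ℝ)| := by
        have hne : ((j:ℕ):ℤ) ≠ ((k:ℕ):ℤ) := by
          exact_mod_cast fun h => hjk (Fin.ext h)
        have h := Int.one_le_abs (sub_ne_zero.mpr hne)
        have : ((1:ℤ):ℝ) ≤ ((|(j:ℕ) - (k:ℕ)| : ℤ) : ℝ) := by exact_mod_cast h
        push_cast at this
        convert this using 2
      have hdenlb : γ ≤ ‖(((j : ℕ) : ℂ) - ((k : ℕ) : ℂ)) * (γ : ℂ) + 2 * Complex.I‖ := by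
        have habs := Complex.abs_re_le_norm
          ((((j : ℕ) : ℂ) - ((k : ℕ) : ℂ)) * (γ : ℂ) + 2 * Complex.I)
        have hre : ((((j : ℕ) : ℂ) - ((k : ℕ) : ℂ)) * (γ : ℂ) + 2 * Complex.I).re
            = (((j:ℕ):ℝ) - ((k:ℕ):ℝ)) * γ := by
          simp [Complex.add_re, Complex.mul_re]
        rw [hre, abs_mul, abs_of_pos hγ0] at habs
        have : γ ≤ |((j:ℕ):ℝ) - ((k:ℕ):ℝ)| * γ := by nlinarith
        exact this.trans habs
      exact div_le_div_of_nonneg_left (by norm_num) hγ0 hdenlb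
  -- the operator norm bound
  have hnorm : ‖Matrix.toEuclideanCLM (𝕜 := ℂ) (n := Fin m) (S - 1)‖ < 1 / 4 := by
    have h1 := aux_opNorm_le_frobenius (S - 1)
    have h2 : (∑ j, ∑ k, ‖(S - 1) j k‖ ^ 2) ≤ ((m:ℝ) * (2 / γ)) ^ 2 := by
      calc ∑ j, ∑ k, ‖(S - 1) j k‖ ^ 2
          ≤ ∑ _j : Fin m, ∑ _k : Fin m, (2 / γ) ^ 2 := by
            refine Finset.sum_le_sum fun j _ => Finset.sum_le_sum fun k _ => ?_
            exact pow_le_pow_left₀ (norm_nonneg _) (hentry j k) 2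
        _ = ((m:ℝ) * (2 / γ)) ^ 2 := by
            simp [Finset.sum_const]
            ring
    have h3 : Real.sqrt (∑ j, ∑ k, ‖(S - 1) j k‖ ^ 2) ≤ (m:ℝ) * (2 / γ) := by
      rw [show (m:ℝ) * (2 / γ) = Real.sqrt (((m:ℝ) * (2 / γ)) ^ 2) from
        (Real.sqrt_sq (by positivity)).symm]
      exact Real.sqrt_le_sqrt h2
    have h4 : (m:ℝ) * (2 / γ) < 1 / 4 := by
      rw [show (m:ℝ) * (2 / γ) = 2 * m / γ by ring, div_lt_iff₀ hγ0]
      nlinarith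
    linarith
  refine ⟨hnorm, ?_⟩
  -- hermitian
  have hherm : S.IsHermitian := by
    ext j k
    rw [conjTranspose_apply, hS k j, hS j k]
    rw [show (star : ℂ → ℂ) = starRingEnd ℂ from rfl, map_div₀]
    have hc1 : (starRingEnd ℂ) (2 * Complex.I) = -(2 * Complex.I) := by
      simp [_root_.map_mul, Complex.conj_I, Complex.conj_ofNat]
    have hc2 : (starRingEnd ℂ) ((((k : ℕ) : ℂ) - ((j : ℕ) : ℂ)) * (γ : ℂ) + 2 * Complex.I)
        = (((k : ℕ) : ℂ) - ((j : ℕ) : ℂ)) * (γ : ℂ) - 2 * Complex.I := by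
      simp [map_add, _root_.map_mul, map_sub, Complex.conj_I, Complex.conj_natCast,
        Complex.conj_ofReal, Complex.conj_ofNat]
      ring
    rw [hc1, hc2, div_eq_div_iff (hden' k j) (hden j k)]
    ring
  -- positive definiteness
  refine posDef_iff_dotProduct_mulVec.mpr ⟨hherm, fun x hx => ?_⟩
  set T := Matrix.toEuclideanCLM (𝕜 := ℂ) (n := Fin m) (S - 1) with hT
  set x' : EuclideanSpace ℂ (Fin m) := (WithLp.equiv 2 (Fin m → ℂ)).symm x with hx'
  set q : ℂ := star x ⬝ᵥ S *ᵥ x with hq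
  have hsplit : S *ᵥ x = x + (S - 1) *ᵥ x := by
    rw [sub_mulVec, one_mulVec]; abel
  have e0 : q = star x ⬝ᵥ x + star x ⬝ᵥ ((S - 1) *ᵥ x) := by
    rw [hq, hsplit, dotProduct_add]
  have e1 : star x ⬝ᵥ x = ((‖x'‖ : ℂ)) ^ 2 := by
    rw [show star x ⬝ᵥ x = @inner ℂ _ _ x' x' from (dotProduct_comm _ _).trans rfl,
      inner_self_eq_norm_sq_to_K]
    norm_cast
  have e2 : star x ⬝ᵥ ((S - 1) *ᵥ x) = @inner ℂ _ _ x' (T x') := by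
    rw [dotProduct_comm]
    rfl
  have hx'0 : x' ≠ 0 := by
    simpa [hx'] using (WithLp.equiv 2 (Fin m → ℂ)).symm.injective.ne hx
  have hnx : 0 < ‖x'‖ := norm_pos_iff.mpr hx'0
  have hip : ‖@inner ℂ _ _ x' (T x')‖ ≤ ‖T‖ * ‖x'‖ ^ 2 := by
    calc ‖@inner ℂ _ _ x' (T x')‖ ≤ ‖x'‖ * ‖T x'‖ := norm_inner_le_norm _ _
      _ ≤ ‖x'‖ * (‖T‖ * ‖x'‖) := by
          exact mul_le_mul_of_nonneg_left (T.le_opNorm x') (norm_nonneg _)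
      _ = ‖T‖ * ‖x'‖ ^ 2 := by ring
  have hstar : star q = q := by
    calc star q = star (S *ᵥ x) ⬝ᵥ x := (star_dotProduct _ _).symm
      _ = (star x ᵥ* Sᴴ) ⬝ᵥ x := by rw [star_mulVec]
      _ = star x ⬝ᵥ (Sᴴ *ᵥ x) := (dotProduct_mulVec _ _ _).symm
      _ = q := by rw [hherm.eq]
  rw [RCLike.pos_iff]
  constructor
  · have hre : RCLike.re q = ‖x'‖ ^ 2 + RCLike.re (@inner ℂ _ _ x' (T x')) := by
      rw [e0, e1, e2]
      simp [Complex.add_re, ← Complex.ofReal_pow]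
    rw [hre]
    have h1 : |RCLike.re (@inner ℂ _ _ x' (T x'))| ≤ ‖@inner ℂ _ _ x' (T x')‖ :=
      RCLike.abs_re_le_norm _
    have h2 : ‖T‖ * ‖x'‖ ^ 2 ≤ (1/4) * ‖x'‖ ^ 2 := by nlinarith
    have h3 : -((1/4) * ‖x'‖ ^ 2) ≤ RCLike.re (@inner ℂ _ _ x' (T x')) := by
      have := (abs_le.mp (h1.trans (hip.trans h2))).1
      linarith
    nlinarith
  · exact Complex.conj_eq_iff_im.mp hstar
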